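/- Let q be a real number with 0 < q and q ≠ 1, let d be an odd positive integer, let n ≥ 0 be an integer, and let x be real. Then 𝓔_{n,q}(x) = [d]_q^n · ([2]_q/[2]_{q^d}) · ∑_{a=0}^{d−1} (−1)^a 𝓔_{n,q^d}((x+a)/d), where 𝓔_{n,q^d} denotes the modified q-Euler polynomial with q replaced by q^d. -/

import Mathlib

/-- The modified `q`-Euler polynomials
`𝓔_{n,q}(x) = [2]_q (1/(1-q))^n ∑_{l=0}^n C(n,l) (-1)^l q^{lx}/(1+q^l)`
(here `q ^ ((l : ℝ) * x)` is the real power `rpow`). -/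
noncomputable def modqEulerPoly (q : ℝ) (n : ℕ) (x : ℝ) : ℝ :=
  (1 + q) * (1 / (1 - q)) ^ n *
    ∑ l ∈ Finset.range (n + 1),
      (n.choose l : ℝ) * (-1) ^ l * q ^ ((l : ℝ) * x) / (1 + q ^ l)

/-- Distribution relation: for odd positive `d`,
`𝓔_{n,q}(x) = [d]_q^n ([2]_q/[2]_{q^d}) ∑_{a=0}^{d-1} (-1)^a 𝓔_{n,q^d}((x+a)/d)`. -/
theorem modqEulerPoly_distribution (q : ℝ) (hq0 : 0 < q) (hq1 : q ≠ 1)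
    (d : ℕ) (hd : 0 < d) (hdo : Odd d) (n : ℕ) (x : ℝ) :
    modqEulerPoly q n x =
      ((1 - q ^ d) / (1 - q)) ^ n * ((1 + q) / (1 + q ^ d)) *
        ∑ a ∈ Finset.range d, (-1) ^ a * modqEulerPoly (q ^ d) n ((x + a) / d) := by
  have hd' : (d : ℝ) ≠ 0 := Nat.cast_ne_zero.mpr hd.ne'
  have hqd1 : q ^ d ≠ 1 := by
    rcases lt_or_gt_of_ne hq1 with h | h
    · exact ne_of_lt (pow_lt_one₀ hq0.le h hd.ne')
    · exact ne_of_gt (one_lt_pow₀ h hd.ne')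
  have h1q : (1:ℝ) - q ≠ 0 := sub_ne_zero.mpr (Ne.symm hq1)
  have h1qd : (1:ℝ) - q ^ d ≠ 0 := sub_ne_zero.mpr (Ne.symm hqd1)
  have hpos : ∀ l : ℕ, (0:ℝ) < 1 + q ^ l := fun l => by positivity
  have hrpow : ∀ l a : ℕ, (q ^ d) ^ ((l:ℝ) * ((x + a) / d)) =
      q ^ ((l:ℝ) * x) * (q ^ l) ^ a := by
    intro l a
    rw [← Real.rpow_natCast q d, ← Real.rpow_natCast (q ^ l) a,
      ← Real.rpow_natCast q l, ← Real.rpow_mul hq0.le, ← Real.rpow_mul hq0.le,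
      ← Real.rpow_add hq0]
    congr 1
    field_simp
  have key : ∀ l : ℕ, (∑ a ∈ Finset.range d, (-(q ^ l)) ^ a) =
      (1 + q ^ (d * l)) / (1 + q ^ l) := by
    intro l
    have hne : (-(q ^ l)) ≠ 1 := by nlinarith [pow_pos hq0 l]
    rw [geom_sum_eq hne, hdo.neg_pow, ← pow_mul, mul_comm l d]
    rw [div_eq_div_iff (by nlinarith [pow_pos hq0 l]) (hpos l).ne']
    ring
  have expand : ∀ a ∈ Finset.range d,
      (-1:ℝ) ^ a * modqEulerPoly (q ^ d) n ((x + a) / d) =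
      ∑ l ∈ Finset.range (n + 1),
        ((1 + q ^ d) * (1 / (1 - q ^ d)) ^ n *
          ((n.choose l : ℝ) * (-1) ^ l * q ^ ((l:ℝ) * x) / (1 + q ^ (d * l)))) *
          (-(q ^ l)) ^ a := by
    intro a _
    unfold modqEulerPoly
    simp only [Finset.mul_sum]
    apply Finset.sum_congr rfl
    intro l _
    rw [hrpow l a, ← pow_mul q d l]
    have h2 := (hpos (d * l)).ne'
    field_simp
    ring
  rw [Finset.sum_congr rfl expand, Finset.sum_comm]
  have step : ∀ l ∈ Finset.range (n + 1),
      (∑ a ∈ Finset.range d,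
        ((1 + q ^ d) * (1 / (1 - q ^ d)) ^ n *
          ((n.choose l : ℝ) * (-1) ^ l * q ^ ((l:ℝ) * x) / (1 + q ^ (d * l)))) *
          (-(q ^ l)) ^ a) =
      ((1 + q ^ d) * (1 / (1 - q ^ d)) ^ n *
          ((n.choose l : ℝ) * (-1) ^ l * q ^ ((l:ℝ) * x) / (1 + q ^ (d * l)))) *
        ((1 + q ^ (d * l)) / (1 + q ^ l)) := by
    intro l _
    rw [← Finset.mul_sum, key l]
  rw [Finset.sum_congr rfl step]
  unfold modqEulerPoly
  simp only [Finset.mul_sum]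
  apply Finset.sum_congr rfl
  intro l _
  have h1 := (hpos l).ne'
  have h2 := (hpos (d * l)).ne'
  field_simp
  have e : (1 - q ^ d) / (1 - q) * (1 / (1 - q ^ d)) = 1 / (1 - q) := by
    field_simp
  rw [mul_assoc, ← mul_pow, e]
  ring
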